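/- Suppose the measure μ has compact support, g is increasing (nondecreasing) with g(r) > 0 for all r > 0, and μ is not supported in any line (i.e., μ(ℝⁿ \ L) > 0 for every affine line L in ℝⁿ). Then there is at most one point x_c ∈ ℝⁿ with V(x_c) = 0. -/

import Mathlib

open MeasureTheory Filter Set
open scoped RealInnerProductSpace Topology

/-- The radial vector field `v(y) = g(|y|) y/|y|` (with `v(0)=0`). -/
noncomputable def radialField {n : ℕ} (g : ℝ → ℝ)
    (y : EuclideanSpace ℝ (Fin n)) : EuclideanSpace ℝ (Fin n) :=
  (g ‖y‖ / ‖y‖) • y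

/-- The vector field `V(x) = ∫ v(x+y) dμ(y)`. -/
noncomputable def VField {n : ℕ} (g : ℝ → ℝ)
    (μ : Measure (EuclideanSpace ℝ (Fin n)))
    (x : EuclideanSpace ℝ (Fin n)) : EuclideanSpace ℝ (Fin n) :=
  ∫ y, radialField g (x + y) ∂μ

section Aux

variable {n : ℕ} {g : ℝ → ℝ}

lemma radialField_key_expand (a b : EuclideanSpace ℝ (Fin n)) :
    ⟪radialField g a - radialField g b, a - b⟫ =
      g ‖a‖ / ‖a‖ * (‖a‖ ^ 2 - ⟪a, b⟫) + g ‖b‖ / ‖b‖ * (‖b‖ ^ 2 - ⟪a, b⟫) := by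
  simp only [radialField, inner_sub_left, inner_sub_right, real_inner_smul_left,
    real_inner_self_eq_norm_sq, real_inner_comm b a]
  ring

lemma g_nonneg' (hg0 : g 0 = 0) (hg_pos : ∀ r : ℝ, 0 < r → 0 < g r) {r : ℝ} (hr : 0 ≤ r) :
    0 ≤ g r := by
  rcases hr.eq_or_lt with h | h
  · simp [← h, hg0]
  · exact (hg_pos r h).le

lemma radialField_key_nonneg (hg0 : g 0 = 0) (hg_mono : MonotoneOn g (Ici 0))
    (hg_pos : ∀ r : ℝ, 0 < r → 0 < g r) (a b : EuclideanSpace ℝ (Fin n)) :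
    0 ≤ ⟪radialField g a - radialField g b, a - b⟫ := by
  rw [radialField_key_expand]
  rcases eq_or_ne a 0 with rfl | ha
  · have hb := g_nonneg' hg0 hg_pos (norm_nonneg b)
    simp only [norm_zero, hg0, zero_div, zero_mul, inner_zero_left, sub_zero, zero_add]
    positivity
  rcases eq_or_ne b 0 with rfl | hb
  · have ha' := g_nonneg' hg0 hg_pos (norm_nonneg a)
    simp only [norm_zero, hg0, zero_div, zero_mul, inner_zero_right, sub_zero, add_zero]
    positivity
  · have hA : 0 < ‖a‖ := norm_pos_iff.mpr ha
    have hB : 0 < ‖b‖ := norm_pos_iff.mpr hb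
    have hgA : 0 < g ‖a‖ := hg_pos _ hA
    have hgB : 0 < g ‖b‖ := hg_pos _ hB
    have hp : ⟪a, b⟫ ≤ ‖a‖ * ‖b‖ := real_inner_le_norm a b
    have hmono : 0 ≤ (g ‖a‖ - g ‖b‖) * (‖a‖ - ‖b‖) := by
      rcases le_total ‖a‖ ‖b‖ with h | h
      · have := hg_mono (mem_Ici.2 (norm_nonneg a)) (mem_Ici.2 (norm_nonneg b)) h
        nlinarith
      · have := hg_mono (mem_Ici.2 (norm_nonneg b)) (mem_Ici.2 (norm_nonneg a)) h
        nlinarith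
    have h1 : g ‖a‖ * (‖a‖ - ‖b‖) ≤ g ‖a‖ / ‖a‖ * (‖a‖ ^ 2 - ⟪a, b⟫) := by
      rw [div_mul_eq_mul_div, le_div_iff₀ hA]
      nlinarith [mul_le_mul_of_nonneg_left hp hgA.le]
    have h2 : g ‖b‖ * (‖b‖ - ‖a‖) ≤ g ‖b‖ / ‖b‖ * (‖b‖ ^ 2 - ⟪a, b⟫) := by
      rw [div_mul_eq_mul_div, le_div_iff₀ hB]
      nlinarith [mul_le_mul_of_nonneg_left hp hgB.le]
    nlinarith

lemma radialField_key_pos (hg0 : g 0 = 0) (hg_mono : MonotoneOn g (Ici 0))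
    (hg_pos : ∀ r : ℝ, 0 < r → 0 < g r) {a b : EuclideanSpace ℝ (Fin n)}
    (ha : a ≠ 0) (hb : b ≠ 0) (hab : ⟪a, b⟫ < ‖a‖ * ‖b‖) :
    0 < ⟪radialField g a - radialField g b, a - b⟫ := by
  rw [radialField_key_expand]
  have hA : 0 < ‖a‖ := norm_pos_iff.mpr ha
  have hB : 0 < ‖b‖ := norm_pos_iff.mpr hb
  have hgA : 0 < g ‖a‖ := hg_pos _ hA
  have hgB : 0 < g ‖b‖ := hg_pos _ hB
  have hmono : 0 ≤ (g ‖a‖ - g ‖b‖) * (‖a‖ - ‖b‖) := by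
    rcases le_total ‖a‖ ‖b‖ with h | h
    · have := hg_mono (mem_Ici.2 (norm_nonneg a)) (mem_Ici.2 (norm_nonneg b)) h
      nlinarith
    · have := hg_mono (mem_Ici.2 (norm_nonneg b)) (mem_Ici.2 (norm_nonneg a)) h
      nlinarith
  have h1 : g ‖a‖ * (‖a‖ - ‖b‖) < g ‖a‖ / ‖a‖ * (‖a‖ ^ 2 - ⟪a, b⟫) := by
    rw [div_mul_eq_mul_div, lt_div_iff₀ hA]
    nlinarith [mul_lt_mul_of_pos_left hab hgA]
  have h2 : g ‖b‖ * (‖b‖ - ‖a‖) ≤ g ‖b‖ / ‖b‖ * (‖b‖ ^ 2 - ⟪a, b⟫) := by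
    rw [div_mul_eq_mul_div, le_div_iff₀ hB]
    nlinarith [mul_le_mul_of_nonneg_left hab.le hgB.le]
  nlinarith

lemma not_on_line_strict_cs {d b : EuclideanSpace ℝ (Fin n)} (hd : d ≠ 0)
    (hb : ∀ t : ℝ, b ≠ t • d) : ⟪b + d, b⟫ < ‖b + d‖ * ‖b‖ := by
  have hbne : b ≠ 0 := fun h => hb 0 (by simp [h])
  have hane : b + d ≠ 0 := by
    intro h
    exact hb (-1) (by rw [neg_one_smul, eq_neg_iff_add_eq_zero.mpr h])
  rcases (real_inner_le_norm (b + d) b).lt_or_eq with h | h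
  · exact h
  · exfalso
    have heq : ‖b‖ • (b + d) = ‖b + d‖ • b := inner_eq_norm_mul_iff_real.mp h
    have hkey : ‖b‖ • d = (‖b + d‖ - ‖b‖) • b := by
      rw [sub_smul, ← heq]
      rw [smul_add]
      abel
    rcases eq_or_ne (‖b + d‖ - ‖b‖) 0 with hc | hc
    · rw [hc, zero_smul, smul_eq_zero] at hkey
      rcases hkey with h' | h'
      · exact hbne (norm_eq_zero.mp h')
      · exact hd h'
    · apply hb ((‖b + d‖ - ‖b‖)⁻¹ * ‖b‖)
      rw [mul_smul, hkey, smul_smul, inv_mul_cancel₀ hc, one_smul]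

lemma radialField_continuous (hg_cont : ContinuousOn g (Ici 0)) (hg0 : g 0 = 0) :
    Continuous (radialField (n := n) g) := by
  rw [continuous_iff_continuousAt]
  intro y
  rcases eq_or_ne y 0 with rfl | hy
  · have hb : ∀ z : EuclideanSpace ℝ (Fin n), ‖radialField g z‖ ≤ |g ‖z‖| := by
      intro z
      rcases eq_or_ne z 0 with rfl | hz
      · simp [radialField]
      · have hz' : 0 < ‖z‖ := norm_pos_iff.mpr hz
        rw [radialField, norm_smul, Real.norm_eq_abs, abs_div, abs_of_nonneg (norm_nonneg z),
          div_mul_cancel₀ _ hz'.ne']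
    have hnorm : Tendsto (fun z : EuclideanSpace ℝ (Fin n) => ‖z‖) (𝓝 0) (𝓝[Ici 0] 0) := by
      rw [tendsto_nhdsWithin_iff]
      exact ⟨continuous_norm.tendsto' 0 0 norm_zero,
        Eventually.of_forall fun z => mem_Ici.2 (norm_nonneg z)⟩
    have hg : Tendsto (fun z : EuclideanSpace ℝ (Fin n) => g ‖z‖) (𝓝 0) (𝓝 0) := by
      have := (hg_cont 0 (mem_Ici.2 le_rfl)).tendsto
      rw [hg0] at this
      exact this.comp hnorm
    have ht : Tendsto (fun z : EuclideanSpace ℝ (Fin n) => |g ‖z‖|) (𝓝 0) (𝓝 0) := by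
      simpa using hg.abs
    have := squeeze_zero_norm hb ht
    have h0 : radialField (n := n) g 0 = 0 := by simp [radialField]
    rw [ContinuousAt, h0]
    exact this
  · have hy' : 0 < ‖y‖ := norm_pos_iff.mpr hy
    have hgc : ContinuousAt g ‖y‖ := hg_cont.continuousAt (Ici_mem_nhds hy')
    exact ((hgc.comp continuous_norm.continuousAt).div continuous_norm.continuousAt
      hy'.ne').smul continuousAt_id

lemma radialField_integrable (hg_cont : ContinuousOn g (Ici 0)) (hg0 : g 0 = 0)
    {μ : Measure (EuclideanSpace ℝ (Fin n))} [IsFiniteMeasure μ]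
    {K : Set (EuclideanSpace ℝ (Fin n))} (hK : IsCompact K) (hK0 : μ Kᶜ = 0)
    (x : EuclideanSpace ℝ (Fin n)) :
    Integrable (fun y => radialField g (x + y)) μ := by
  have hc : Continuous fun y : EuclideanSpace ℝ (Fin n) => radialField g (x + y) :=
    (radialField_continuous hg_cont hg0).comp (continuous_const.add continuous_id)
  have h1 : IntegrableOn (fun y => radialField g (x + y)) K μ :=
    hc.continuousOn.integrableOn_compact hK
  have h2 : Integrable (K.indicator fun y => radialField g (x + y)) μ :=
    (integrable_indicator_iff hK.isClosed.measurableSet).mpr h1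
  apply h2.congr
  have haeK : ∀ᵐ y ∂μ, y ∈ K := by
    rw [ae_iff]
    exact hK0
  filter_upwards [haeK] with y hy
  exact indicator_of_mem hy _

end Aux

theorem center_of_mass_unique_monotone_not_in_line {n : ℕ} (hn : 1 ≤ n)
    (g : ℝ → ℝ) (hg_cont : ContinuousOn g (Ici 0)) (hg0 : g 0 = 0)
    (hg_mono : MonotoneOn g (Ici 0)) (hg_pos : ∀ r : ℝ, 0 < r → 0 < g r)
    (μ : Measure (EuclideanSpace ℝ (Fin n)))
    (hμpos : 0 < μ Set.univ) (hμfin : μ Set.univ < ⊤)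
    (hμcpt : ∃ K : Set (EuclideanSpace ℝ (Fin n)), IsCompact K ∧ μ Kᶜ = 0)
    (hμline : ∀ a b : EuclideanSpace ℝ (Fin n), b ≠ 0 →
      0 < μ ({y | ∃ t : ℝ, y = a + t • b}ᶜ)) :
    ∀ x₁ x₂ : EuclideanSpace ℝ (Fin n),
      VField g μ x₁ = 0 → VField g μ x₂ = 0 → x₁ = x₂ := by
  intro x₁ x₂ h1 h2
  by_contra hne
  haveI : IsFiniteMeasure μ := ⟨hμfin⟩
  obtain ⟨K, hK, hK0⟩ := hμcpt
  set d : EuclideanSpace ℝ (Fin n) := x₁ - x₂ with hd_def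
  have hd : d ≠ 0 := sub_ne_zero.mpr hne
  set f : EuclideanSpace ℝ (Fin n) → ℝ :=
    fun y => ⟪d, radialField g (x₁ + y) - radialField g (x₂ + y)⟫ with hf_def
  have hdiff : ∀ y : EuclideanSpace ℝ (Fin n), (x₁ + y) - (x₂ + y) = d := by
    intro y; rw [hd_def]; abel
  have hf_nonneg : ∀ y, 0 ≤ f y := by
    intro y
    have := radialField_key_nonneg hg0 hg_mono hg_pos (x₁ + y) (x₂ + y)
    rw [hdiff y] at this
    show 0 ≤ ⟪d, radialField g (x₁ + y) - radialField g (x₂ + y)⟫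
    rw [real_inner_comm]
    exact this
  have hint1 : Integrable (fun y => radialField g (x₁ + y)) μ :=
    radialField_integrable hg_cont hg0 hK hK0 x₁
  have hint2 : Integrable (fun y => radialField g (x₂ + y)) μ :=
    radialField_integrable hg_cont hg0 hK hK0 x₂
  have hf_int : Integrable f μ := by
    have h := (innerSL ℝ d).integrable_comp (hint1.sub hint2)
    simp only [Pi.sub_apply, innerSL_apply_apply] at h
    exact h
  have hf_zero : ∫ y, f y ∂μ = 0 := by
    have h := integral_inner (𝕜 := ℝ) (hint1.sub hint2) d
    simp only [Pi.sub_apply] at h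
    show (∫ y, ⟪d, radialField g (x₁ + y) - radialField g (x₂ + y)⟫ ∂μ) = 0
    rw [h, integral_sub hint1 hint2]
    have h0 : (∫ y, radialField g (x₁ + y) ∂μ) - ∫ y, radialField g (x₂ + y) ∂μ = 0 := by
      rw [← VField, ← VField, h1, h2, sub_zero]
    rw [h0, inner_zero_right]
  have hae : f =ᵐ[μ] 0 := by
    rw [← integral_eq_zero_iff_of_nonneg hf_nonneg hf_int]
    exact hf_zero
  have hnull : μ {y | f y ≠ 0} = 0 := by
    have := hae
    rw [Filter.EventuallyEq, ae_iff] at this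
    simpa using this
  have hline := hμline (-x₂) d hd
  have hsub : {y | ∃ t : ℝ, y = -x₂ + t • d}ᶜ ⊆ {y | f y ≠ 0} := by
    intro y hy
    have hbt : ∀ t : ℝ, x₂ + y ≠ t • d := by
      intro t ht
      apply hy
      exact ⟨t, by rw [← ht]; abel⟩
    have hcs : ⟪(x₂ + y) + d, x₂ + y⟫ < ‖(x₂ + y) + d‖ * ‖x₂ + y‖ :=
      not_on_line_strict_cs hd hbt
    have hbne : (x₂ + y) ≠ 0 := fun h => hbt 0 (by simp [h])
    have hane : (x₂ + y) + d ≠ 0 := by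
      intro h
      exact hbt (-1) (by rw [neg_one_smul, eq_neg_iff_add_eq_zero.mpr h])
    have ha_eq : (x₂ + y) + d = x₁ + y := by rw [hd_def]; abel
    rw [ha_eq] at hcs hane
    have hpos := radialField_key_pos hg0 hg_mono hg_pos hane hbne hcs
    rw [hdiff y] at hpos
    have hfy : 0 < f y := by
      show 0 < ⟪d, radialField g (x₁ + y) - radialField g (x₂ + y)⟫
      rw [real_inner_comm]
      exact hpos
    exact hfy.ne'
  have : μ ({y | ∃ t : ℝ, y = -x₂ + t • d}ᶜ) ≤ 0 := hnull ▸ measure_mono hsub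
  exact absurd (lt_of_lt_of_le hline this) (lt_irrefl 0)
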